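/- In the right-mutation setting (𝒟 ⊆ 𝒞 satisfying (RCP), ℋ_𝒟 = CoCone(𝒟,𝒞), 𝒞' = ℋ_𝒟 ∩ 𝒟^⊥¹), the functor F' : ℋ_𝒟/𝒞' → (ℋ/𝒞)_{S_𝒜} is dense: every object of the localization (ℋ/𝒞)_{S_𝒜} is isomorphic to F'(Y) for some Y ∈ ℋ_𝒟. -/

import Mathlib

open CategoryTheory Category Limits ZeroObject

universe v u

namespace CotorsionPaper

variable {B : Type u} [Category.{v} B] [Abelian B]

/-- `f, g` form a short exact sequence `0 → X → Y → Z → 0`. -/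
def IsSES {X Y Z : B} (f : X ⟶ Y) (g : Y ⟶ Z) : Prop :=
  ∃ w : f ≫ g = 0, (ShortComplex.mk f g w).ShortExact

/-- `Ext¹(X, Y) = 0`: every short exact sequence `0 → Y → E → X → 0` splits. -/
def Ext1Zero (X Y : B) : Prop :=
  ∀ ⦃E : B⦄ (i : Y ⟶ E) (p : E ⟶ X), IsSES i p → ∃ s : X ⟶ E, s ≫ p = 𝟙 X

/-- `Ext²(X, Y) = 0`, via dimension shifting: `Ext¹(K, Y) = 0` for any syzygy `K` of `X`. -/
def Ext2Zero (X Y : B) : Prop :=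
  ∀ ⦃K P : B⦄ (i : K ⟶ P) (p : P ⟶ X), Projective P → IsSES i p → Ext1Zero K Y

/-- A (strictly) full additive subcategory: closed under isomorphisms,
contains a zero object and is closed under finite direct sums. -/
structure AddSubcat (S : Set B) : Prop where
  zero_mem : (0 : B) ∈ S
  iso_closed : ∀ ⦃X Y : B⦄, (X ≅ Y) → X ∈ S → Y ∈ S
  sum_closed : ∀ ⦃X Y : B⦄, X ∈ S → Y ∈ S → (X ⊞ Y) ∈ S

/-- `S` is closed under direct summands (retracts). -/
def ClosedUnderSummands (S : Set B) : Prop :=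
  ∀ ⦃X Y : B⦄ (r : X ⟶ Y) (s : Y ⟶ X), s ≫ r = 𝟙 Y → X ∈ S → Y ∈ S

/-- `S` is rigid: `Ext¹(X, Y) = 0` for all `X, Y ∈ S`. -/
def Rigid (S : Set B) : Prop :=
  ∀ ⦃X⦄, X ∈ S → ∀ ⦃Y⦄, Y ∈ S → Ext1Zero X Y

/-- `S^⊥¹`. -/
def rightPerp (S : Set B) : Set B := {Y | ∀ ⦃X⦄, X ∈ S → Ext1Zero X Y}

/-- `^⊥¹S`. -/
def leftPerp (S : Set B) : Set B := {X | ∀ ⦃Y⦄, Y ∈ S → Ext1Zero X Y}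

/-- `f : X ⟶ A` is a right `S`-approximation of `A`. -/
def IsRightApprox (S : Set B) {X A : B} (f : X ⟶ A) : Prop :=
  X ∈ S ∧ ∀ ⦃X' : B⦄, X' ∈ S → ∀ g : X' ⟶ A, ∃ h : X' ⟶ X, h ≫ f = g

def ContravariantlyFinite (S : Set B) : Prop :=
  ∀ A : B, ∃ (X : B) (f : X ⟶ A), IsRightApprox S f

/-- `f : A ⟶ X` is a left `S`-approximation of `A`. -/
def IsLeftApprox (S : Set B) {A X : B} (f : A ⟶ X) : Prop :=
  X ∈ S ∧ ∀ ⦃X' : B⦄, X' ∈ S → ∀ g : A ⟶ X', ∃ h : X ⟶ X', f ≫ h = g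

def CovariantlyFinite (S : Set B) : Prop :=
  ∀ A : B, ∃ (X : B) (f : A ⟶ X), IsLeftApprox S f

/-- `(U, V)` is a cotorsion pair. -/
structure CotorsionPair (U V : Set B) : Prop where
  summands_left : ClosedUnderSummands U
  summands_right : ClosedUnderSummands V
  ext : ∀ ⦃X⦄, X ∈ U → ∀ ⦃Y⦄, Y ∈ V → Ext1Zero X Y
  resol : ∀ X : B, ∃ (VX UX : B) (i : VX ⟶ UX) (p : UX ⟶ X),
    VX ∈ V ∧ UX ∈ U ∧ IsSES i p
  coresol : ∀ X : B, ∃ (VX UX : B) (i : X ⟶ VX) (p : VX ⟶ UX),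
    VX ∈ V ∧ UX ∈ U ∧ IsSES i p

/-- `CoCone(S, T)`. -/
def CoCone (S T : Set B) : Set B :=
  {X | ∃ (B' B'' : B) (i : X ⟶ B') (p : B' ⟶ B''), B' ∈ S ∧ B'' ∈ T ∧ IsSES i p}

/-- `Cone(S, T)`. -/
def Cone (S T : Set B) : Set B :=
  {X | ∃ (B' B'' : B) (i : B' ⟶ B'') (p : B'' ⟶ X), B' ∈ S ∧ B'' ∈ T ∧ IsSES i p}

/-- The subcategory `𝒫` of projective objects. -/
def projSet : Set B := {P | Projective P}

/-- The subcategory `ℐ` of injective objects. -/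
def injSet : Set B := {I | Injective I}

/-- `Ω𝒞`, the (first) syzygy of `𝒞`. -/
def Syz (C : Set B) : Set B := CoCone projSet C

/-- Condition (RCP): `𝒫 ⊆ 𝒞`, `𝒞` rigid, contravariantly finite,
closed under direct summands (and a full additive subcategory). -/
structure RCP (C : Set B) : Prop where
  add : AddSubcat C
  proj_mem : ∀ ⦃P : B⦄, Projective P → P ∈ C
  rigid : Rigid C
  contra : ContravariantlyFinite C
  summands : ClosedUnderSummands C

/-- `f` factors through an object of `S`. -/
def FactorsThru (S : Set B) {X Y : B} (f : X ⟶ Y) : Prop :=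
  ∃ (Z : B) (g : X ⟶ Z) (h : Z ⟶ Y), Z ∈ S ∧ g ≫ h = f

/-- The ideal of morphisms of the full subcategory on `H` factoring through an object of `S`. -/
def idealRel (H S : Set B) : HomRel (ObjectProperty.FullSubcategory (show ObjectProperty B from H)) :=
  fun X Y f g => FactorsThru S (show X.obj ⟶ Y.obj from f.hom - g.hom)

/-- The ideal quotient `H/S`. -/
abbrev HeartCat (H S : Set B) := CategoryTheory.Quotient (idealRel H S)

/-- The quotient functor `H → H/S`. -/
abbrev heartQ (H S : Set B) : ObjectProperty.FullSubcategory (show ObjectProperty B from H) ⥤ HeartCat H S :=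
  CategoryTheory.Quotient.functor _

/-- The zero morphism in the ideal quotient `H/S`. -/
def heartZero (H S : Set B) (X Y : HeartCat H S) : X ⟶ Y :=
  (heartQ H S).map (0 : X.as ⟶ Y.as)

/-- `κ` is a kernel of `φ` in the ideal quotient `H/S`. -/
structure IsKernelArrow {H S : Set B} {K X Y : HeartCat H S}
    (κ : K ⟶ X) (φ : X ⟶ Y) : Prop where
  w : κ ≫ φ = heartZero H S K Y
  lift : ∀ ⦃T : HeartCat H S⦄ (t : T ⟶ X), t ≫ φ = heartZero H S T Y →
    ∃! u : T ⟶ K, u ≫ κ = t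

/-- `π` is a cokernel of `φ` in the ideal quotient `H/S`. -/
structure IsCokernelArrow {H S : Set B} {X Y Q : HeartCat H S}
    (φ : X ⟶ Y) (π : Y ⟶ Q) : Prop where
  w : φ ≫ π = heartZero H S X Q
  desc : ∀ ⦃T : HeartCat H S⦄ (t : Y ⟶ T), φ ≫ t = heartZero H S X T →
    ∃! u : Q ⟶ T, π ≫ u = t

/-- The class of epimorphisms in `H/S` whose kernel object lies in `A`. -/
def epiClassWithKernelIn (H S A : Set B) : MorphismProperty (HeartCat H S) :=
  fun X Y φ => Epi φ ∧ ∃ (K : HeartCat H S) (κ : K ⟶ X),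
    K.as.obj ∈ A ∧ IsKernelArrow κ φ

/-- The class of monomorphisms in `H/S` whose cokernel object lies in `A`. -/
def monoClassWithCokernelIn (H S A : Set B) : MorphismProperty (HeartCat H S) :=
  fun X Y φ => Mono φ ∧ ∃ (Q : HeartCat H S) (π : Y ⟶ Q),
    Q.as.obj ∈ A ∧ IsCokernelArrow φ π

/-- The diagram `(⋄)` associated with a morphism `f : Y ⟶ X`. -/
structure DiamondDiagram {Y X : B} (f : Y ⟶ X) {OmX PX Z₁ IY SgY Z₂ : B}
    (q : OmX ⟶ PX) (p : PX ⟶ X) (j : OmX ⟶ Z₁) (g : Z₁ ⟶ Y)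
    (i : Y ⟶ IY) (c : IY ⟶ SgY) (h : X ⟶ Z₂) (e : Z₂ ⟶ SgY)
    (u : Z₁ ⟶ PX) (v : IY ⟶ Z₂) : Prop where
  projPX : Projective PX
  injIY : Injective IY
  ses_proj : IsSES q p
  ses_pullback : IsSES j g
  ses_inj : IsSES i c
  ses_pushout : IsSES h e
  comm₁ : j ≫ u = q
  comm₂ : u ≫ p = g ≫ f
  comm₃ : f ≫ h = i ≫ v
  comm₄ : v ≫ e = c

/-- The class of morphisms `f : Y ⟶ X` admitting a diagram `(⋄)` with
`Z₁ ∈ ZCond` and `h` factoring through an object of `HCond`. -/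
def Rclass (ZCond HCond : Set B) : MorphismProperty B :=
  fun Y X f => ∃ (OmX PX Z₁ IY SgY Z₂ : B) (q : OmX ⟶ PX) (p : PX ⟶ X)
    (j : OmX ⟶ Z₁) (g : Z₁ ⟶ Y) (i : Y ⟶ IY) (c : IY ⟶ SgY)
    (h : X ⟶ Z₂) (e : Z₂ ⟶ SgY) (u : Z₁ ⟶ PX) (v : IY ⟶ Z₂),
    DiamondDiagram f q p j g i c h e u v ∧ Z₁ ∈ ZCond ∧ FactorsThru HCond h

/-- The class of morphisms `f : Y ⟶ X` admitting a diagram `(⋄)` with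
`g` factoring through an object of `GCond` and `h` through an object of `HCond`. -/
def RtildeClass (GCond HCond : Set B) : MorphismProperty B :=
  fun Y X f => ∃ (OmX PX Z₁ IY SgY Z₂ : B) (q : OmX ⟶ PX) (p : PX ⟶ X)
    (j : OmX ⟶ Z₁) (g : Z₁ ⟶ Y) (i : Y ⟶ IY) (c : IY ⟶ SgY)
    (h : X ⟶ Z₂) (e : Z₂ ⟶ SgY) (u : Z₁ ⟶ PX) (v : IY ⟶ Z₂),
    DiamondDiagram f q p j g i c h e u v ∧ FactorsThru GCond g ∧ FactorsThru HCond h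

/-- The objects of the heart `ℋ` of a cotorsion pair `(U, V)`. -/
def HeartObjects (U V : Set B) : Set B :=
  {X | (∃ (VX UX : B) (i : VX ⟶ UX) (p : UX ⟶ X),
          IsSES i p ∧ VX ∈ V ∧ UX ∈ U ∩ V) ∧
       (∃ (VX UX : B) (i : X ⟶ VX) (p : VX ⟶ UX),
          IsSES i p ∧ VX ∈ U ∩ V ∧ UX ∈ U)}


lemma IsSES.w' {X Y Z : B} {f : X ⟶ Y} {g : Y ⟶ Z} (h : IsSES f g) : f ≫ g = 0 := h.choose

lemma IsSES.mono {X Y Z : B} {f : X ⟶ Y} {g : Y ⟶ Z} (h : IsSES f g) : Mono f :=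
  h.choose_spec.mono_f

lemma IsSES.epi {X Y Z : B} {f : X ⟶ Y} {g : Y ⟶ Z} (h : IsSES f g) : Epi g :=
  h.choose_spec.epi_g

lemma IsSES.lift {X Y Z T : B} {f : X ⟶ Y} {g : Y ⟶ Z} (h : IsSES f g) (t : T ⟶ Y)
    (ht : t ≫ g = 0) : ∃ u : T ⟶ X, u ≫ f = t := by
  obtain ⟨w, hse⟩ := h
  obtain ⟨l, hl⟩ := KernelFork.IsLimit.lift' hse.fIsKernel t ht
  exact ⟨l, by simpa using hl⟩

lemma IsSES.desc {X Y Z T : B} {f : X ⟶ Y} {g : Y ⟶ Z} (h : IsSES f g) (t : Y ⟶ T)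
    (ht : f ≫ t = 0) : ∃ u : Z ⟶ T, g ≫ u = t := by
  obtain ⟨w, hse⟩ := h
  obtain ⟨l, hl⟩ := CokernelCofork.IsColimit.desc' hse.gIsCokernel t ht
  exact ⟨l, by simpa using hl⟩

lemma isSES_kernel {X Y : B} (f : X ⟶ Y) [Epi f] : IsSES (kernel.ι f) f :=
  ⟨kernel.condition f, { exact := ShortComplex.exact_of_f_is_kernel _ (kernelIsKernel f) }⟩

/-- Pushing out a short exact sequence `0 → A → Bb → Cc → 0` along `f : A ⟶ M` gives a
short exact sequence `0 → M → P → Cc → 0`. -/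
lemma pushout_inl_isSES {A Bb Cc M : B} (f : A ⟶ M) {ib : A ⟶ Bb} {c : Bb ⟶ Cc}
    (h : IsSES ib c) :
    IsSES (pushout.inl f ib)
      (pushout.desc (0 : M ⟶ Cc) c (by rw [comp_zero, h.w'])) := by
  haveI := h.mono
  haveI := h.epi
  set ρ : pushout f ib ⟶ Cc := pushout.desc (0 : M ⟶ Cc) c (by rw [comp_zero, h.w']) with hρ
  have hinlρ : pushout.inl f ib ≫ ρ = 0 := pushout.inl_desc _ _ _
  have hinrρ : pushout.inr f ib ≫ ρ = c := pushout.inr_desc _ _ _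
  haveI : Epi ρ := by
    haveI : Epi (pushout.inr f ib ≫ ρ) := by rw [hinrρ]; infer_instance
    exact epi_of_epi (pushout.inr f ib) ρ
  refine ⟨hinlρ, { exact := ShortComplex.exact_of_g_is_cokernel _ ?_ }⟩
  refine CokernelCofork.IsColimit.ofπ' (f := pushout.inl f ib) ρ hinlρ ?_
  intro T t ht
  have h0 : ib ≫ pushout.inr f ib ≫ t = 0 := by
    rw [← pushout.condition_assoc, ht, comp_zero]
  refine ⟨(h.desc _ h0).choose, ?_⟩
  have hs := (h.desc _ h0).choose_spec
  apply pushout.hom_ext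
  · rw [reassoc_of% hinlρ, zero_comp, ht]
  · rw [reassoc_of% hinrρ, hs]

/-- Pushing out a short exact sequence `0 → A → Bb → Cc → 0` along `f : A ⟶ M`, inr version. -/
lemma pushout_inr_isSES {A Bb Cc M : B} {ib : A ⟶ Bb} {c : Bb ⟶ Cc} (h : IsSES ib c)
    (f : A ⟶ M) :
    IsSES (pushout.inr ib f)
      (pushout.desc c (0 : M ⟶ Cc) (by rw [comp_zero, h.w'])) := by
  haveI := h.mono
  haveI := h.epi
  set ρ : pushout ib f ⟶ Cc := pushout.desc c (0 : M ⟶ Cc) (by rw [comp_zero, h.w']) with hρ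
  have hinlρ : pushout.inl ib f ≫ ρ = c := pushout.inl_desc _ _ _
  have hinrρ : pushout.inr ib f ≫ ρ = 0 := pushout.inr_desc _ _ _
  haveI : Epi ρ := by
    haveI : Epi (pushout.inl ib f ≫ ρ) := by rw [hinlρ]; infer_instance
    exact epi_of_epi (pushout.inl ib f) ρ
  refine ⟨hinrρ, { exact := ShortComplex.exact_of_g_is_cokernel _ ?_ }⟩
  refine CokernelCofork.IsColimit.ofπ' (f := pushout.inr ib f) ρ hinrρ ?_
  intro T t ht
  have h0 : ib ≫ pushout.inl ib f ≫ t = 0 := by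
    rw [pushout.condition_assoc, ht, comp_zero]
  refine ⟨(h.desc _ h0).choose, ?_⟩
  have hs := (h.desc _ h0).choose_spec
  apply pushout.hom_ext
  · rw [reassoc_of% hinlρ, hs]
  · rw [reassoc_of% hinrρ, zero_comp, ht]

/-- If `Ext¹(Cc, M) = 0` then any map `A ⟶ M` extends along the inflation `A ⟶ Bb`. -/
lemma ext_lift {A Bb Cc M : B} {ib : A ⟶ Bb} {c : Bb ⟶ Cc} (h : IsSES ib c)
    (hext : Ext1Zero Cc M) (f : A ⟶ M) : ∃ fh : Bb ⟶ M, ib ≫ fh = f := by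
  have hses := pushout_inl_isSES f h
  obtain ⟨σ, hσ⟩ := hext _ _ hses
  set ρ : pushout f ib ⟶ Cc := pushout.desc (0 : M ⟶ Cc) c (by rw [comp_zero, h.w']) with hρ
  have he : (𝟙 (pushout f ib) - ρ ≫ σ) ≫ ρ = 0 := by
    rw [Preadditive.sub_comp, id_comp, assoc, hσ, comp_id, sub_self]
  obtain ⟨r, hr⟩ := hses.lift _ he
  have hinlρ : pushout.inl f ib ≫ ρ = 0 := pushout.inl_desc _ _ _
  have hinlr : pushout.inl f ib ≫ r = 𝟙 M := by
    haveI := hses.mono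
    rw [← cancel_mono (pushout.inl f ib), assoc, hr, Preadditive.comp_sub, comp_id, id_comp,
      reassoc_of% hinlρ, zero_comp, sub_zero]
  refine ⟨pushout.inr f ib ≫ r, ?_⟩
  rw [← pushout.condition_assoc, hinlr, comp_id]

/-- Wakamatsu-style lemma: if `0 → W → Bo → Co → 0` is exact, `Ext¹(D'', Bo) = 0` and every
map `D'' ⟶ Co` lifts along `Bo ⟶ Co`, then `Ext¹(D'', W) = 0`. -/
lemma ext1Zero_kernel_of_lift {Wo Bo Co : B} {b : Wo ⟶ Bo} {dd : Bo ⟶ Co} (h : IsSES b dd)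
    {D'' : B} (hext : Ext1Zero D'' Bo)
    (hlift : ∀ φ : D'' ⟶ Co, ∃ l : D'' ⟶ Bo, l ≫ dd = φ) :
    Ext1Zero D'' Wo := by
  intro E i' p' hE
  -- G := pushout b i'
  have seqA := pushout_inr_isSES h i'
  have seqB := pushout_inl_isSES b hE
  -- seqB lives on `pushout b i'` as well? pushout_inl_isSES b hE : pushout b i' with SES (i',p')
  -- seqB : IsSES (pushout.inl b i') (pushout.desc 0 p' _)
  set π : pushout b i' ⟶ Co := pushout.desc dd (0 : E ⟶ Co) (by rw [comp_zero, h.w']) with hπ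
  set ρ : pushout b i' ⟶ D'' := pushout.desc (0 : Bo ⟶ D'') p' (by rw [comp_zero, hE.w']) with hρd
  obtain ⟨σ, hσ⟩ := hext _ _ seqB
  obtain ⟨l, hl⟩ := hlift (σ ≫ π)
  have hτ'π : (σ - l ≫ pushout.inl b i') ≫ π = 0 := by
    rw [Preadditive.sub_comp, assoc, pushout.inl_desc, hl, sub_self]
  obtain ⟨τ, hτ⟩ := seqA.lift _ hτ'π
  refine ⟨τ, ?_⟩
  have hinrρ : pushout.inr b i' ≫ ρ = p' := pushout.inr_desc _ _ _
  have hinlρ : pushout.inl b i' ≫ ρ = 0 := pushout.inl_desc _ _ _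
  rw [← hinrρ, ← assoc, hτ, Preadditive.sub_comp, assoc, hinlρ, comp_zero, sub_zero, hσ]

/-- The pullback of a short exact sequence `0 → X → C0 → C1 → 0` along an epi `d : D0 ⟶ C0`
gives a short exact sequence `0 → pullback d iX → D0 → C1 → 0`. -/
lemma pullback_fst_isSES {D0 C0 C1 X : B} {iX : X ⟶ C0} {p : C0 ⟶ C1} (h : IsSES iX p)
    (d : D0 ⟶ C0) [Epi d] : IsSES (pullback.fst d iX) (d ≫ p) := by
  haveI := h.mono
  haveI := h.epi
  haveI hmono : Mono (pullback.fst d iX) := by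
    constructor
    intro Z z₁ z₂ hz
    apply pullback.hom_ext
    · exact hz
    · rw [← cancel_mono iX, assoc, assoc, ← pullback.condition, ← assoc, ← assoc, hz]
  have w : pullback.fst d iX ≫ d ≫ p = 0 := by
    rw [pullback.condition_assoc, h.w', comp_zero]
  refine ⟨w, { exact := ShortComplex.exact_of_f_is_kernel _ ?_ }⟩
  refine KernelFork.IsLimit.ofι' _ w ?_
  intro T t ht
  have ht' : (t ≫ d) ≫ p = 0 := by rwa [assoc]
  exact ⟨pullback.lift t (h.lift (t ≫ d) ht').choose (h.lift (t ≫ d) ht').choose_spec.symm,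
    pullback.lift_fst _ _ _⟩

/-- An epi right approximation always exists under (RCP), by adding a projective cover. -/
lemma exists_epi_right_approx [EnoughProjectives B] {S : Set B} (hS : RCP S) (A : B) :
    ∃ (Xa : B) (f : Xa ⟶ A), Xa ∈ S ∧ Epi f ∧
      ∀ ⦃X' : B⦄, X' ∈ S → ∀ g : X' ⟶ A, ∃ h : X' ⟶ Xa, h ≫ f = g := by
  obtain ⟨X0, f0, hX0, happ⟩ := hS.contra A
  refine ⟨X0 ⊞ Projective.over A, biprod.desc f0 (Projective.π A),
    hS.add.sum_closed hX0 (hS.proj_mem (Projective.projective_over A)), ?_, ?_⟩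
  · haveI : Epi (biprod.inr ≫ biprod.desc f0 (Projective.π A)) := by
      rw [biprod.inr_desc]; infer_instance
    exact epi_of_epi biprod.inr _
  · intro X' hX' g
    obtain ⟨h, hh⟩ := happ hX' g
    exact ⟨h ≫ biprod.inl, by rw [assoc, biprod.inl_desc, hh]⟩

lemma factorsThru_zero {S : Set B} (h0 : (0 : B) ∈ S) {X Y : B} :
    FactorsThru S (0 : X ⟶ Y) :=
  ⟨0, 0, 0, h0, by simp⟩

lemma FactorsThru.add {S : Set B}
    (hsum : ∀ ⦃X Y : B⦄, X ∈ S → Y ∈ S → (X ⊞ Y) ∈ S) {X Y : B} {f g : X ⟶ Y}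
    (hf : FactorsThru S f) (hg : FactorsThru S g) : FactorsThru S (f + g) := by
  obtain ⟨Z1, a1, b1, h1, e1⟩ := hf
  obtain ⟨Z2, a2, b2, h2, e2⟩ := hg
  exact ⟨Z1 ⊞ Z2, biprod.lift a1 a2, biprod.desc b1 b2, hsum h1 h2,
    by rw [biprod.lift_desc, e1, e2]⟩

lemma idealRel_of {H S : Set B} {X Y : ObjectProperty.FullSubcategory (show ObjectProperty B from H)} {f g : X ⟶ Y}
    (h : FactorsThru S (f.hom - g.hom)) : idealRel H S f g := h

lemma idealRel_factors {H S : Set B} {X Y : ObjectProperty.FullSubcategory (show ObjectProperty B from H)} {f g : X ⟶ Y}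
    (h : idealRel H S f g) : FactorsThru S (f.hom - g.hom) := h

lemma idealRel_congruence {H : Set B} {S : Set B} (h0 : (0 : B) ∈ S)
    (hsum : ∀ ⦃X Y : B⦄, X ∈ S → Y ∈ S → (X ⊞ Y) ∈ S) :
    Congruence (idealRel H S) where
  equivalence := by
    intro X Y
    constructor
    · intro f
      apply idealRel_of
      rw [sub_self]
      exact ⟨0, 0, 0, h0, by simp⟩
    · intro f g hfg
      obtain ⟨Z, aa, bb, hZ, he⟩ := idealRel_factors hfg
      apply idealRel_of
      exact ⟨Z, -aa, bb, hZ, by rw [Preadditive.neg_comp, he, neg_sub]⟩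
    · intro f g h hfg hgh
      obtain ⟨Z1, a1, b1, h1, e1⟩ := idealRel_factors hfg
      obtain ⟨Z2, a2, b2, h2, e2⟩ := idealRel_factors hgh
      apply idealRel_of
      refine ⟨Z1 ⊞ Z2, biprod.lift a1 a2, biprod.desc b1 b2, hsum h1 h2, ?_⟩
      rw [biprod.lift_desc, e1, e2, sub_add_sub_cancel]
  comp_left := by
    intro X Y Z f g g' hgg
    obtain ⟨W, aa, bb, hW, he⟩ := idealRel_factors hgg
    apply idealRel_of
    exact ⟨W, f.hom ≫ aa, bb, hW, by rw [assoc, he, Preadditive.comp_sub]; rfl⟩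
  comp_right := by
    intro X Y Z f f' g hff
    obtain ⟨W, aa, bb, hW, he⟩ := idealRel_factors hff
    apply idealRel_of
    exact ⟨W, aa, bb ≫ g.hom, hW, by rw [← assoc, he, Preadditive.sub_comp]; rfl⟩


section Chases

variable {B : Type u} [Category.{v} B] [Abelian B]

/-- The epi chase: if `g ≫ t` factors through `S` then so does `t`. -/
lemma epi_chase {S : Set B} {Y X C0 C1 D0 W : B}
    {j : Y ⟶ D0} {g : Y ⟶ X} {iX : X ⟶ C0} {p : C0 ⟶ C1} {d : D0 ⟶ C0}
    {ιW : W ⟶ D0} {κW : W ⟶ Y}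
    (hC0 : C0 ∈ S)
    (hrig : ∀ ⦃C' : B⦄, C' ∈ S → Ext1Zero C1 C')
    (hYses : IsSES j (d ≫ p)) (hWses : IsSES ιW d)
    (hcond : j ≫ d = g ≫ iX) (hκWj : κW ≫ j = ιW) (hκWg : κW ≫ g = 0)
    [Epi g] :
    ∀ {T' : B} (t : X ⟶ T'), FactorsThru S (g ≫ t) → FactorsThru S t := by
  intro T' t hft
  obtain ⟨C₀, a, b, hC₀, hab⟩ := hft
  obtain ⟨aext, haext⟩ := ext_lift hYses (hrig hC₀) a
  have hjab : j ≫ aext ≫ b = g ≫ t := by rw [← assoc, haext, hab]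
  have h0 : ιW ≫ aext ≫ b = 0 := by
    rw [← hκWj]
    simp only [assoc]
    rw [hjab, ← assoc, hκWg, zero_comp]
  obtain ⟨r, hr⟩ := hWses.desc (aext ≫ b) h0
  have h2 : g ≫ iX ≫ r = g ≫ t := by
    rw [← reassoc_of% hcond, hr, hjab]
  have key : t = iX ≫ r := by rw [← cancel_epi g]; exact h2.symm
  exact ⟨C0, iX, r, hC0, key.symm⟩

/-- The kernel lifting chase. -/
lemma ker_lift_chase {S : Set B} {Y X C0 D0 CX K : B}
    {j : Y ⟶ D0} {g : Y ⟶ X} {iX : X ⟶ C0} {d : D0 ⟶ C0} {cX : CX ⟶ X}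
    {k1 : K ⟶ D0} {k2 : K ⟶ CX} {κ : K ⟶ Y}
    (hcond : j ≫ d = g ≫ iX)
    (hcapp : ∀ ⦃C' : B⦄, C' ∈ S → ∀ b : C' ⟶ X, ∃ h : C' ⟶ CX, h ≫ cX = b)
    (hKkernel : ∀ {T : B} (m1 : T ⟶ D0) (m2 : T ⟶ CX),
      m1 ≫ d + (m2 ≫ cX) ≫ iX = 0 → ∃ u : T ⟶ K, u ≫ k1 = m1 ∧ u ≫ k2 = m2)
    (hjm : ∀ {T : B} (x y : T ⟶ Y), x ≫ j = y ≫ j → x ≫ g = y ≫ g → x = y)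
    (hκ1 : κ ≫ j = k1) (hκ2 : κ ≫ g = -(k2 ≫ cX)) :
    ∀ {T' : B} (t : T' ⟶ Y), FactorsThru S (t ≫ g) → ∃ u : T' ⟶ K, u ≫ κ = t := by
  intro T' t hft
  obtain ⟨C₀, a, b, hC₀, hab⟩ := hft
  obtain ⟨b₂, hb₂⟩ := hcapp hC₀ b
  have hm : (t ≫ j) ≫ d + ((-(a ≫ b₂)) ≫ cX) ≫ iX = 0 := by
    simp only [assoc, Preadditive.neg_comp]
    rw [hcond, reassoc_of% hb₂, reassoc_of% hab, add_neg_cancel]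
  obtain ⟨u, hu1, hu2⟩ := hKkernel (t ≫ j) (-(a ≫ b₂)) hm
  refine ⟨u, hjm _ _ ?_ ?_⟩
  · rw [assoc, hκ1, hu1]
  · rw [assoc, hκ2, Preadditive.comp_neg, reassoc_of% hu2, Preadditive.neg_comp, neg_neg,
      assoc, hb₂, hab]

/-- The kernel uniqueness chase. -/
lemma ker_unique_chase {S : Set B} {Y X C0 D0 CX K L T' CT0 CT1 : B}
    {j : Y ⟶ D0} {g : Y ⟶ X} {iX : X ⟶ C0} {d : D0 ⟶ C0} {cX : CX ⟶ X}
    {k1 : K ⟶ D0} {k2 : K ⟶ CX} {κ : K ⟶ Y} {ℓ0 : L ⟶ CX} {ℓ : L ⟶ K}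
    {ιT : T' ⟶ CT0} {πT : CT0 ⟶ CT1}
    (hsum : ∀ ⦃X' Y' : B⦄, X' ∈ S → Y' ∈ S → (X' ⊞ Y') ∈ S)
    (hcond : j ≫ d = g ≫ iX)
    (hcapp : ∀ ⦃C' : B⦄, C' ∈ S → ∀ b : C' ⟶ X, ∃ h : C' ⟶ CX, h ≫ cX = b)
    (hKkernel : ∀ {T : B} (m1 : T ⟶ D0) (m2 : T ⟶ CX),
      m1 ≫ d + (m2 ≫ cX) ≫ iX = 0 → ∃ u : T ⟶ K, u ≫ k1 = m1 ∧ u ≫ k2 = m2)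
    (hjm : ∀ {T : B} (x y : T ⟶ Y), x ≫ j = y ≫ j → x ≫ g = y ≫ g → x = y)
    (hkm : ∀ {T : B} (x y : T ⟶ K), x ≫ k1 = y ≫ k1 → x ≫ k2 = y ≫ k2 → x = y)
    (hκ1 : κ ≫ j = k1) (hκ2 : κ ≫ g = -(k2 ≫ cX))
    (hLkernel : ∀ {T : B} (m : T ⟶ CX), m ≫ cX = 0 → ∃ w : T ⟶ L, w ≫ ℓ0 = m)
    (hℓ1 : ℓ ≫ k1 = 0) (hℓ2 : ℓ ≫ k2 = ℓ0)
    (hL : Ext1Zero CT1 L)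
    (hTses : IsSES ιT πT) (hCT0 : CT0 ∈ S)
    (v : T' ⟶ K) (hv : FactorsThru S (v ≫ κ)) : FactorsThru S v := by
  obtain ⟨C₀, a, b, hC₀, hab⟩ := hv
  obtain ⟨b₂, hb₂⟩ := hcapp hC₀ (b ≫ g)
  have hβm : (b ≫ j) ≫ d + ((-b₂) ≫ cX) ≫ iX = 0 := by
    simp only [assoc, Preadditive.neg_comp]
    rw [hcond, reassoc_of% hb₂]
    exact add_neg_cancel _
  obtain ⟨β, hβ1, hβ2⟩ := hKkernel (b ≫ j) (-b₂) hβm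
  have hβκ : β ≫ κ = b := by
    apply hjm
    · rw [assoc, hκ1, hβ1]
    · rw [assoc, hκ2, Preadditive.comp_neg, reassoc_of% hβ2, Preadditive.neg_comp, neg_neg, hb₂]
  have hv'κ : (v - a ≫ β) ≫ κ = 0 := by
    rw [Preadditive.sub_comp, assoc, hβκ, hab, sub_self]
  have hv1 : (v - a ≫ β) ≫ k1 = 0 := by
    rw [← hκ1, ← assoc, hv'κ, zero_comp]
  have hv2c : ((v - a ≫ β) ≫ k2) ≫ cX = 0 := by
    have h5 : (v - a ≫ β) ≫ k2 ≫ cX = -(((v - a ≫ β) ≫ κ) ≫ g) := by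
      rw [assoc, hκ2, Preadditive.comp_neg, neg_neg]
    rw [assoc, h5, hv'κ, zero_comp, neg_zero]
  obtain ⟨v'', hv''⟩ := hLkernel _ hv2c
  have hvℓ : v - a ≫ β = v'' ≫ ℓ := by
    apply hkm
    · rw [hv1, assoc, hℓ1, comp_zero]
    · rw [assoc, hℓ2, hv'']
  obtain ⟨vh, hvh⟩ := ext_lift hTses hL v''
  have hfinal : v = a ≫ β + ιT ≫ (vh ≫ ℓ) := by
    rw [← assoc, hvh, ← hvℓ]
    abel
  rw [hfinal]
  exact FactorsThru.add hsum ⟨C₀, a, β, hC₀, rfl⟩ ⟨CT0, ιT, vh ≫ ℓ, hCT0, rfl⟩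

end Chases

/-- the functor `F' : ℋ_𝒟/𝒞' → (ℋ/𝒞)_{S_𝒜}` is dense. -/
theorem statement_10 {B : Type u} [Category.{v} B] [Abelian B]
    [EnoughProjectives B] [EnoughInjectives B]
    (C D : Set B) (hC : RCP C) (hD : RCP D) (hDC : D ⊆ C) :
    ∀ T : (epiClassWithKernelIn (CoCone C C) C (rightPerp D)).Localization,
      ∃ (Y : B) (hY : Y ∈ CoCone D C) (hY' : Y ∈ CoCone C C),
        Nonempty (T ≅ (epiClassWithKernelIn (CoCone C C) C (rightPerp D)).Q.obj
          ((heartQ (CoCone C C) C).obj ⟨Y, hY'⟩)) := by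
  haveI : Congruence (idealRel (CoCone C C) C) :=
    idealRel_congruence hC.add.zero_mem hC.add.sum_closed
  intro T
  -- the heart object underlying `T`
  let Tq : HeartCat (CoCone C C) C :=
    (show Localization.Construction.LocQuiver
        (epiClassWithKernelIn (CoCone C C) C (rightPerp D)) from T.as).obj
  let Xfs : ObjectProperty.FullSubcategory (show ObjectProperty B from CoCone C C) := Tq.as
  obtain ⟨C0, C1, iX, p, hC0, hC1, hsesX⟩ := Xfs.property
  -- epi right approximations
  obtain ⟨D0, d, hD0, hdepi, hdapp⟩ := exists_epi_right_approx hD C0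
  obtain ⟨CX, cX, hCX, hcepi, hcapp⟩ := exists_epi_right_approx hC Xfs.obj
  haveI := hdepi
  haveI := hcepi
  -- the object Y := pullback of d along iX
  have hYses : IsSES (pullback.fst d iX) (d ≫ p) := pullback_fst_isSES hsesX d
  have hcond : pullback.fst d iX ≫ d = pullback.snd d iX ≫ iX := pullback.condition
  have hYD : pullback d iX ∈ CoCone D C :=
    ⟨D0, C1, pullback.fst d iX, d ≫ p, hD0, hC1, hYses⟩
  have hYC : pullback d iX ∈ CoCone C C :=
    ⟨D0, C1, pullback.fst d iX, d ≫ p, hDC hD0, hC1, hYses⟩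
  haveI : Epi (pullback.snd d iX) := inferInstance
  -- the map e and its kernel K
  set e : (D0 ⊞ CX) ⟶ C0 := biprod.fst ≫ d + biprod.snd ≫ (cX ≫ iX) with he_def
  have hinle : biprod.inl ≫ e = d := by simp [he_def]
  haveI : Epi e := by
    haveI : Epi (biprod.inl ≫ e) := by rw [hinle]; infer_instance
    exact epi_of_epi biprod.inl e
  have hKses : IsSES (kernel.ι e) e := isSES_kernel e
  have hkrel : (kernel.ι e ≫ biprod.fst) ≫ d + ((kernel.ι e ≫ biprod.snd) ≫ cX) ≫ iX = 0 := by
    have hc := kernel.condition e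
    rw [he_def, Preadditive.comp_add] at hc
    simpa [assoc] using hc
  have hκcond : (kernel.ι e ≫ biprod.fst) ≫ d
      = (-((kernel.ι e ≫ biprod.snd) ≫ cX)) ≫ iX := by
    rw [Preadditive.neg_comp]
    exact eq_neg_of_add_eq_zero_left hkrel
  set κ : kernel e ⟶ pullback d iX :=
    pullback.lift (kernel.ι e ≫ biprod.fst) (-((kernel.ι e ≫ biprod.snd) ≫ cX)) hκcond with hκdef
  have hκ1 : κ ≫ pullback.fst d iX = kernel.ι e ≫ biprod.fst := pullback.lift_fst _ _ _
  have hκ2 : κ ≫ pullback.snd d iX = -((kernel.ι e ≫ biprod.snd) ≫ cX) := pullback.lift_snd _ _ _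
  -- membership facts for K
  have hKC : kernel e ∈ CoCone C C :=
    ⟨D0 ⊞ CX, C0, kernel.ι e, e, hC.add.sum_closed (hDC hD0) hCX, hC0, hKses⟩
  have hKperp : kernel e ∈ rightPerp D := by
    intro D'' hD''
    refine ext1Zero_kernel_of_lift hKses
      (hC.rigid (hDC hD'') (hC.add.sum_closed (hDC hD0) hCX)) ?_
    intro φ
    obtain ⟨l, hl⟩ := hdapp hD'' φ
    exact ⟨l ≫ biprod.inl, by rw [assoc, hinle, hl]⟩
  -- Ext-vanishing for the kernel of cX
  have hcXses : IsSES (kernel.ι cX) cX := isSES_kernel cX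
  have hLext : ∀ {C' : B}, C' ∈ C → Ext1Zero C' (kernel cX) := fun hC' =>
    ext1Zero_kernel_of_lift hcXses (hC.rigid hC' hCX) (fun φ => hcapp hC' φ)
  -- the kernel property of K, repackaged
  have hKkernel : ∀ {T'' : B} (m1 : T'' ⟶ D0) (m2 : T'' ⟶ CX),
      m1 ≫ d + (m2 ≫ cX) ≫ iX = 0 →
      ∃ u : T'' ⟶ kernel e, u ≫ (kernel.ι e ≫ biprod.fst) = m1
        ∧ u ≫ (kernel.ι e ≫ biprod.snd) = m2 := by
    intro T'' m1 m2 hrel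
    have hm : biprod.lift m1 m2 ≫ e = 0 := by
      rw [he_def, Preadditive.comp_add, biprod.lift_fst_assoc, biprod.lift_snd_assoc]
      rw [← assoc]
      exact hrel
    exact ⟨kernel.lift e _ hm, by rw [← assoc, kernel.lift_ι, biprod.lift_fst],
      by rw [← assoc, kernel.lift_ι, biprod.lift_snd]⟩
  -- joint monomorphy
  have hjm : ∀ {T'' : B} (x y : T'' ⟶ pullback d iX),
      x ≫ pullback.fst d iX = y ≫ pullback.fst d iX →
      x ≫ pullback.snd d iX = y ≫ pullback.snd d iX → x = y :=
    fun x y h1 h2 => pullback.hom_ext h1 h2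
  have hkm : ∀ {T'' : B} (x y : T'' ⟶ kernel e),
      x ≫ (kernel.ι e ≫ biprod.fst) = y ≫ (kernel.ι e ≫ biprod.fst) →
      x ≫ (kernel.ι e ≫ biprod.snd) = y ≫ (kernel.ι e ≫ biprod.snd) → x = y := by
    intro T'' x y h1 h2
    rw [← cancel_mono (kernel.ι e)]
    apply biprod.hom_ext
    · rw [assoc, assoc]; exact h1
    · rw [assoc, assoc]; exact h2
  -- the map ℓ : kernel cX ⟶ kernel e
  have hℓm : biprod.lift (0 : kernel cX ⟶ D0) (kernel.ι cX) ≫ e = 0 := by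
    rw [he_def, Preadditive.comp_add, biprod.lift_fst_assoc, biprod.lift_snd_assoc,
      zero_comp, zero_add, ← assoc, kernel.condition, zero_comp]
  set ℓ : kernel cX ⟶ kernel e := kernel.lift e _ hℓm with hℓdef
  have hℓ1 : ℓ ≫ (kernel.ι e ≫ biprod.fst) = 0 := by
    rw [hℓdef, ← assoc, kernel.lift_ι, biprod.lift_fst]
  have hℓ2 : ℓ ≫ (kernel.ι e ≫ biprod.snd) = kernel.ι cX := by
    rw [hℓdef, ← assoc, kernel.lift_ι, biprod.lift_snd]
  have hLkernel : ∀ {T'' : B} (m : T'' ⟶ CX), m ≫ cX = 0 →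
      ∃ w : T'' ⟶ kernel cX, w ≫ kernel.ι cX = m :=
    fun m hm0 => ⟨kernel.lift cX m hm0, kernel.lift_ι _ _ _⟩
  -- the morphism in the heart
  let Yfs : ObjectProperty.FullSubcategory (show ObjectProperty B from CoCone C C) := ⟨pullback d iX, hYC⟩
  let Kfs : ObjectProperty.FullSubcategory (show ObjectProperty B from CoCone C C) := ⟨kernel e, hKC⟩
  let gq : (heartQ (CoCone C C) C).obj Yfs ⟶ (heartQ (CoCone C C) C).obj Xfs :=
    (heartQ (CoCone C C) C).map ((ObjectProperty.homMk (pullback.snd d iX) : Yfs ⟶ Xfs))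
  let kapq : (heartQ (CoCone C C) C).obj Kfs ⟶ (heartQ (CoCone C C) C).obj Yfs :=
    (heartQ (CoCone C C) C).map ((ObjectProperty.homMk κ : Kfs ⟶ Yfs))
  -- gq is an epimorphism in the heart
  have hepi : Epi gq := by
    constructor
    intro Z u₁ u₂ huv
    obtain ⟨Z₀⟩ := Z
    obtain ⟨u₁', rfl⟩ := (heartQ (CoCone C C) C).map_surjective u₁
    obtain ⟨u₂', rfl⟩ := (heartQ (CoCone C C) C).map_surjective u₂
    rw [show gq = (heartQ (CoCone C C) C).map ((ObjectProperty.homMk (pullback.snd d iX) : Yfs ⟶ Xfs)) from rfl,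
      ← Functor.map_comp, ← Functor.map_comp] at huv
    have h1 := idealRel_factors ((Quotient.functor_map_eq_iff _ _ _).mp huv)
    have h2 : FactorsThru C (pullback.snd d iX ≫ u₁'.hom - pullback.snd d iX ≫ u₂'.hom) := h1
    rw [← Preadditive.comp_sub] at h2
    have h3 : FactorsThru C (u₁'.hom - u₂'.hom) := by
      refine epi_chase (j := pullback.fst d iX) (p := p) (ιW := kernel.ι d)
        (κW := pullback.lift (kernel.ι d) 0 (by simp)) hC0 (fun C' hC' => hC.rigid hC1 hC')
        hYses (isSES_kernel d) hcond (pullback.lift_fst _ _ _) (pullback.lift_snd _ _ _)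
        (u₁'.hom - u₂'.hom) h2
    apply CategoryTheory.Quotient.sound
    apply idealRel_of
    exact h3
  -- kapq is a kernel of gq in the heart
  have hker : IsKernelArrow kapq gq := by
    constructor
    · show (heartQ (CoCone C C) C).map _ ≫ (heartQ (CoCone C C) C).map _
        = (heartQ (CoCone C C) C).map 0
      rw [← Functor.map_comp]
      apply CategoryTheory.Quotient.sound
      apply idealRel_of
      show FactorsThru C (κ ≫ pullback.snd d iX - 0)
      rw [sub_zero, hκ2]
      exact ⟨CX, -(kernel.ι e ≫ biprod.snd), cX, hCX, by rw [Preadditive.neg_comp]⟩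
    · intro Tq' t ht
      obtain ⟨T'f⟩ := Tq'
      obtain ⟨t', rfl⟩ := (heartQ (CoCone C C) C).map_surjective t
      rw [show gq = (heartQ (CoCone C C) C).map ((ObjectProperty.homMk (pullback.snd d iX) : Yfs ⟶ Xfs)) from rfl,
        ← Functor.map_comp] at ht
      have ht0 : (heartQ (CoCone C C) C).map (t' ≫ (ObjectProperty.homMk (pullback.snd d iX) : Yfs ⟶ Xfs))
          = (heartQ (CoCone C C) C).map 0 := ht
      have ht1 := idealRel_factors ((Quotient.functor_map_eq_iff _ _ _).mp ht0)
      have ht2 : FactorsThru C (t'.hom ≫ pullback.snd d iX - 0) := ht1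
      rw [sub_zero] at ht2
      obtain ⟨u, hu⟩ := ker_lift_chase hcond hcapp hKkernel hjm hκ1 hκ2 t'.hom ht2
      refine ⟨(heartQ (CoCone C C) C).map ((ObjectProperty.homMk u : T'f ⟶ Kfs)), ?_, ?_⟩
      · show (heartQ (CoCone C C) C).map _ ≫ (heartQ (CoCone C C) C).map _ = _
        rw [← Functor.map_comp]
        have heq : (ObjectProperty.homMk u : T'f ⟶ Kfs) ≫ (ObjectProperty.homMk κ : Kfs ⟶ Yfs) = t' :=
          ObjectProperty.hom_ext _ hu
        rw [heq]
      · intro y hy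
        obtain ⟨y', rfl⟩ := (heartQ (CoCone C C) C).map_surjective y
        rw [show kapq = (heartQ (CoCone C C) C).map ((ObjectProperty.homMk κ : Kfs ⟶ Yfs)) from rfl,
          ← Functor.map_comp] at hy
        have hy1 := idealRel_factors ((Quotient.functor_map_eq_iff _ _ _).mp hy)
        have hy2 : FactorsThru C (y'.hom ≫ κ - t'.hom) := hy1
        have hy3 : FactorsThru C ((y'.hom - u) ≫ κ) := by
          rw [Preadditive.sub_comp, hu]
          exact hy2
        obtain ⟨CT0, CT1, ιT, πT, hCT0, hCT1, hTses⟩ := T'f.property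
        have hy4 : FactorsThru C (y'.hom - u) :=
          ker_unique_chase hC.add.sum_closed hcond hcapp hKkernel hjm hkm hκ1 hκ2
            hLkernel hℓ1 hℓ2 (hLext hCT1) hTses hCT0 (y'.hom - u) hy3
        apply CategoryTheory.Quotient.sound
        apply idealRel_of
        exact hy4
  -- gq belongs to the localizing class
  have hSA : epiClassWithKernelIn (CoCone C C) C (rightPerp D) gq :=
    ⟨hepi, (heartQ (CoCone C C) C).obj Kfs, kapq, hKperp, hker⟩
  exact ⟨pullback d iX, hYD, hYC, ⟨(Localization.Construction.wIso gq hSA).symm⟩⟩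

end CotorsionPaper
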